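/- For weighted values with nondecreasing y-values, the matrix M(i,j) = err(i,j) (extended by M(i,j) = +∞ for j < i) satisfies the Monge inequality M(i₁, j₂) + M(i₂, j₁) ≥ M(i₁, j₁) + M(i₂, j₂) for all i₁ < i₂ and j₁ < j₂. -/

import Mathlib

open Finset

/-- Weighted mean of `y` with weights `w` on the interval `[i, j]`. -/
noncomputable def wmean (w y : ℕ → ℝ) (i j : ℕ) : ℝ :=
  (∑ k ∈ Finset.Icc i j, w k * y k) / (∑ k ∈ Finset.Icc i j, w k)

/-- Minimal weighted squared error of the best constant fit on `[i, j]`. -/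
noncomputable def err (w y : ℕ → ℝ) (i j : ℕ) : ℝ :=
  ∑ k ∈ Finset.Icc i j, w k * (y k - wmean w y i j) ^ 2

/-- The error matrix, extended by `+∞` below the diagonal. -/
noncomputable def errM (w y : ℕ → ℝ) (i j : ℕ) : EReal :=
  if i ≤ j then ((err w y i j : ℝ) : EReal) else ⊤

namespace MongeAux

variable (w y : ℕ → ℝ)

noncomputable def S (i j : ℕ) : ℝ := ∑ k ∈ Finset.Icc i j, w k
noncomputable def B (i j : ℕ) : ℝ := ∑ k ∈ Finset.Icc i j, w k * y k
noncomputable def A (i j : ℕ) : ℝ := ∑ k ∈ Finset.Icc i j, w k * y k ^ 2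

variable {w y}

lemma S_pos (hw : ∀ k, 0 < w k) {i j : ℕ} (h : i ≤ j) : 0 < S w i j :=
  Finset.sum_pos (fun k _ => hw k) (Finset.nonempty_Icc.2 h)

lemma S_mono (hw : ∀ k, 0 < w k) {i₁ i₂ j : ℕ} (h : i₁ ≤ i₂) :
    S w i₂ j ≤ S w i₁ j :=
  Finset.sum_le_sum_of_subset_of_nonneg
    (Finset.Icc_subset_Icc_left h) (fun k _ _ => (hw k).le)

lemma err_eq (hw : ∀ k, 0 < w k) {i j : ℕ} (h : i ≤ j) :
    err w y i j = A w y i j - (B w y i j) ^ 2 / S w i j := by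
  have hs : 0 < S w i j := S_pos hw h
  have hkey : ∀ k ∈ Finset.Icc i j,
      w k * (y k - wmean w y i j) ^ 2 =
        w k * y k ^ 2 - (2 * wmean w y i j) * (w k * y k) + (wmean w y i j) ^ 2 * w k :=
    fun k _ => by ring
  rw [err, Finset.sum_congr rfl hkey, Finset.sum_add_distrib, Finset.sum_sub_distrib,
    ← Finset.mul_sum, ← Finset.mul_sum]
  have hm : wmean w y i j = B w y i j / S w i j := rfl
  rw [hm]
  show A w y i j - 2 * (B w y i j / S w i j) * B w y i j
      + (B w y i j / S w i j) ^ 2 * S w i j = _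
  field_simp
  ring

lemma sum_succ (f : ℕ → ℝ) {i j : ℕ} (h : i ≤ j + 1) :
    ∑ k ∈ Finset.Icc i (j + 1), f k = (∑ k ∈ Finset.Icc i j, f k) + f (j + 1) := by
  rw [← Finset.Ico_add_one_right_eq_Icc, ← Finset.Ico_add_one_right_eq_Icc, Finset.sum_Ico_succ_top h]

lemma S_succ {i j : ℕ} (h : i ≤ j + 1) : S w i (j + 1) = S w i j + w (j + 1) :=
  sum_succ w h

lemma B_succ {i j : ℕ} (h : i ≤ j + 1) :
    B w y i (j + 1) = B w y i j + w (j + 1) * y (j + 1) :=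
  sum_succ (fun k => w k * y k) h

lemma A_succ {i j : ℕ} (h : i ≤ j + 1) :
    A w y i (j + 1) = A w y i j + w (j + 1) * y (j + 1) ^ 2 :=
  sum_succ (fun k => w k * y k ^ 2) h

/-- One-step update for the error. -/
lemma err_succ (hw : ∀ k, 0 < w k) {i j : ℕ} (h : i ≤ j) :
    err w y i (j + 1) - err w y i j =
      w (j + 1) * (y (j + 1) * S w i j - B w y i j) ^ 2
        / (S w i j * (S w i j + w (j + 1))) := by
  have hs : 0 < S w i j := S_pos hw h
  have hw' := hw (j + 1)
  rw [err_eq hw h, err_eq hw (h.trans (Nat.le_succ j)),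
    S_succ (h.trans (Nat.le_succ j)), B_succ (h.trans (Nat.le_succ j)),
    A_succ (h.trans (Nat.le_succ j))]
  field_simp
  ring

/-- Monotonicity of the weighted mean in the left endpoint, in cross-multiplied form. -/
lemma mean_mono (hy : Monotone y) (hw : ∀ k, 0 < w k) {i₁ i₂ j : ℕ}
    (h1 : i₁ ≤ i₂) (h2 : i₂ ≤ j) :
    B w y i₁ j * S w i₂ j ≤ B w y i₂ j * S w i₁ j := by
  have hsplitS : S w i₁ j = (∑ k ∈ Finset.Ico i₁ i₂, w k) + S w i₂ j := by
    rw [S, S, ← Finset.Ico_add_one_right_eq_Icc, ← Finset.Ico_add_one_right_eq_Icc,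
      ← Finset.sum_Ico_consecutive _ h1 (h2.trans (Nat.le_succ j) : i₂ ≤ j + 1)]
  have hsplitB : B w y i₁ j = (∑ k ∈ Finset.Ico i₁ i₂, w k * y k) + B w y i₂ j := by
    rw [B, B, ← Finset.Ico_add_one_right_eq_Icc, ← Finset.Ico_add_one_right_eq_Icc,
      ← Finset.sum_Ico_consecutive _ h1 (h2.trans (Nat.le_succ j) : i₂ ≤ j + 1)]
  have hB0le : (∑ k ∈ Finset.Ico i₁ i₂, w k * y k) ≤ y i₂ * ∑ k ∈ Finset.Ico i₁ i₂, w k := by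
    rw [Finset.mul_sum]
    refine Finset.sum_le_sum fun k hk => ?_
    have hk2 : k < i₂ := (Finset.mem_Ico.1 hk).2
    have := hy hk2.le
    nlinarith [hw k]
  have hB1ge : y i₂ * S w i₂ j ≤ B w y i₂ j := by
    rw [S, B, Finset.mul_sum]
    refine Finset.sum_le_sum fun k hk => ?_
    have hk2 : i₂ ≤ k := (Finset.mem_Icc.1 hk).1
    have := hy hk2
    nlinarith [hw k]
  have hS0nn : (0:ℝ) ≤ ∑ k ∈ Finset.Ico i₁ i₂, w k :=
    Finset.sum_nonneg fun k _ => (hw k).le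
  have hS1 : 0 < S w i₂ j := S_pos hw h2
  rw [hsplitS, hsplitB]
  nlinarith [mul_le_mul_of_nonneg_right hB0le hS1.le,
    mul_le_mul_of_nonneg_right hB1ge hS0nn]

/-- The mean is at most the next value. -/
lemma mean_le_next (hy : Monotone y) (hw : ∀ k, 0 < w k) {i j : ℕ} (h : i ≤ j) :
    B w y i j ≤ y (j + 1) * S w i j := by
  rw [B, S, Finset.mul_sum]
  refine Finset.sum_le_sum fun k hk => ?_
  have hk2 : k ≤ j := (Finset.mem_Icc.1 hk).2
  have := hy (hk2.trans (Nat.le_succ j))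
  nlinarith [hw k]

/-- The one-step increments are antitone in the left endpoint. -/
lemma step (hy : Monotone y) (hw : ∀ k, 0 < w k) {i₁ i₂ j : ℕ}
    (h1 : i₁ ≤ i₂) (h2 : i₂ ≤ j) :
    err w y i₂ (j + 1) - err w y i₂ j ≤ err w y i₁ (j + 1) - err w y i₁ j := by
  rw [err_succ hw (h1.trans h2), err_succ hw h2]
  set s₁ := S w i₁ j
  set s₂ := S w i₂ j
  set b₁ := B w y i₁ j
  set b₂ := B w y i₂ j
  have hs₂ : 0 < s₂ := S_pos hw h2
  have hs₁₂ : s₂ ≤ s₁ := S_mono hw h1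
  have hs₁ : 0 < s₁ := lt_of_lt_of_le hs₂ hs₁₂
  have hwj : 0 < w (j + 1) := hw (j + 1)
  set t := y (j + 1)
  have hcross : b₁ * s₂ ≤ b₂ * s₁ := mean_mono hy hw h1 h2
  have hx₂ : 0 ≤ t * s₂ - b₂ := by
    have := mean_le_next hy hw h2 (y := y)
    linarith
  set x₁ := t * s₁ - b₁ with hx₁def
  set x₂ := t * s₂ - b₂ with hx₂def
  have hxx : x₂ * s₁ ≤ x₁ * s₂ := by rw [hx₁def, hx₂def]; nlinarith
  have h0 : 0 ≤ x₂ * s₁ := mul_nonneg hx₂ hs₁.le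
  have hsq : x₂ ^ 2 * s₁ ^ 2 ≤ x₁ ^ 2 * s₂ ^ 2 := by
    nlinarith [mul_self_le_mul_self h0 hxx]
  rw [div_le_div_iff₀ (by positivity) (by positivity)]
  have hfac : s₂ * (s₁ + w (j + 1)) ≤ s₁ * (s₂ + w (j + 1)) := by nlinarith
  nlinarith [mul_le_mul_of_nonneg_right hsq
      (show (0:ℝ) ≤ s₂ * (s₁ + w (j + 1)) by positivity),
    mul_le_mul_of_nonneg_left hfac (show (0:ℝ) ≤ x₁ ^ 2 * s₂ ^ 2 by positivity),
    mul_pos hs₁ hs₂, mul_pos (mul_pos hs₁ hs₂) hwj]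

/-- Real-valued quadrangle (Monge) inequality. -/
lemma monge_real (hy : Monotone y) (hw : ∀ k, 0 < w k) {i₁ i₂ j₁ : ℕ}
    (h1 : i₁ ≤ i₂) (h2 : i₂ ≤ j₁) :
    ∀ j₂, j₁ ≤ j₂ →
      err w y i₁ j₁ + err w y i₂ j₂ ≤ err w y i₁ j₂ + err w y i₂ j₁ := by
  intro j₂ hj
  induction j₂, hj using Nat.le_induction with
  | base => linarith
  | succ j hj ih =>
    have := step hy hw h1 (h2.trans hj)
    linarith

end MongeAux

/-- For nondecreasing values, the (extended) error matrix is a Monge matrix. -/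
theorem errM_monge (w y : ℕ → ℝ) (hy : Monotone y) (hw : ∀ k, 0 < w k)
    (i₁ i₂ j₁ j₂ : ℕ) (hi : i₁ < i₂) (hj : j₁ < j₂) :
    errM w y i₁ j₁ + errM w y i₂ j₂ ≤ errM w y i₁ j₂ + errM w y i₂ j₁ := by
  by_cases h : i₂ ≤ j₁
  · have h11 : i₁ ≤ j₁ := hi.le.trans h
    have h12 : i₁ ≤ j₂ := h11.trans hj.le
    have h22 : i₂ ≤ j₂ := h.trans hj.le
    simp only [errM, if_pos h11, if_pos h12, if_pos h22, if_pos h,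
      ← EReal.coe_add, EReal.coe_le_coe_iff]
    exact MongeAux.monge_real hy hw hi.le h j₂ hj.le
  · have hne : errM w y i₁ j₂ ≠ ⊥ := by
      unfold errM; split_ifs <;> simp
    have htop : errM w y i₂ j₁ = ⊤ := by unfold errM; rw [if_neg h]
    rw [htop, EReal.add_top_of_ne_bot hne]
    exact le_top
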